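/- arXiv:2010.08755 — 3 statements merged into one kernel-verified Lean document; each statement's English description precedes it below -/
import Mathlib

section
/- Let W_1, ..., W_k be i.i.d. positive integrable random variables and define L_k = E[log((1/k) Σ_{i=1}^k W_i)]. Then for all positive integers m ≤ k, L_m ≤ L_k; equivalently, the intrinsic rewards r^i_k := -L_k satisfy r^i_k ≤ r^i_m. -/
open MeasureTheory ProbabilityTheory

lemma map_joint {Ω : Type*} [MeasurableSpace Ω] (μ : Measure Ω) [IsProbabilityMeasure μ]
    (W : ℕ → Ω → ℝ) (hmeas : ∀ i, Measurable (W i))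
    (hindep : iIndepFun W μ)
    (hident : ∀ i, IdentDistrib (W i) (W 0) μ μ)
    {m : ℕ} (ι : Fin m → ℕ) (hι : Function.Injective ι) :
    μ.map (fun ω j => W (ι j) ω) = Measure.pi (fun _ : Fin m => μ.map (W 0)) := by
  symm
  apply Measure.pi_eq
  intro s hs
  have hF : Measurable (fun ω (j : Fin m) => W (ι j) ω) :=
    measurable_pi_lambda _ fun j => hmeas _
  rw [Measure.map_apply hF (MeasurableSet.univ_pi hs)]
  set sets : ℕ → Set ℝ := Function.extend ι s (fun _ => Set.univ) with hsets
  have hext : ∀ j, sets (ι j) = s j := fun j => hι.extend_apply _ _ j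
  have hpre : (fun ω (j : Fin m) => W (ι j) ω) ⁻¹' (Set.univ.pi s)
      = ⋂ n ∈ Finset.image ι Finset.univ, W n ⁻¹' (sets n) := by
    ext ω
    simp only [Set.mem_preimage, Set.mem_pi, Set.mem_univ, forall_true_left, Set.mem_iInter,
      Finset.mem_image, Finset.mem_univ, true_and]
    constructor
    · rintro h n ⟨j, rfl⟩
      rw [hext]; exact h j
    · intro h j
      have := h (ι j) ⟨j, rfl⟩
      rwa [hext] at this
  rw [hpre]
  rw [hindep.measure_inter_preimage_eq_mul (Finset.image ι Finset.univ)
    (sets := sets) (fun i hi => by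
      rcases Finset.mem_image.mp hi with ⟨j, _, rfl⟩
      rw [hext]; exact hs j)]
  rw [Finset.prod_image (fun a _ b _ h => hι h)]
  refine Finset.prod_congr rfl fun j _ => ?_
  rw [hext, ← (hident (ι j)).map_eq, Measure.map_apply (hmeas (ι j)) (hs j)]

lemma int_subset {Ω : Type*} [MeasurableSpace Ω] (μ : Measure Ω) [IsProbabilityMeasure μ]
    (W : ℕ → Ω → ℝ) (hmeas : ∀ i, Measurable (W i))
    (hindep : iIndepFun W μ)
    (hident : ∀ i, IdentDistrib (W i) (W 0) μ μ)
    {m : ℕ} (S : Finset ℕ) (hS : S.card = m) :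
    (∫ ω, Real.log ((m:ℝ)⁻¹ * ∑ i ∈ S, W i ω) ∂μ
      = ∫ ω, Real.log ((m:ℝ)⁻¹ * ∑ i ∈ Finset.range m, W i ω) ∂μ)
    ∧ (Integrable (fun ω => Real.log ((m:ℝ)⁻¹ * ∑ i ∈ Finset.range m, W i ω)) μ →
       Integrable (fun ω => Real.log ((m:ℝ)⁻¹ * ∑ i ∈ S, W i ω)) μ) := by
  classical
  set e := S.orderIsoOfFin hS with he
  set ι : Fin m → ℕ := fun j => (e j : ℕ) with hι'
  have hι : Function.Injective ι := fun a b h => e.injective (Subtype.ext h)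
  set ι₀ : Fin m → ℕ := fun j => (j : ℕ) with hι₀'
  have hι₀ : Function.Injective ι₀ := fun a b h => Fin.ext h
  set g : (Fin m → ℝ) → ℝ := fun x => Real.log ((m:ℝ)⁻¹ * ∑ j, x j) with hg'
  have hg : Measurable g :=
    Real.measurable_log.comp (measurable_const.mul (Finset.measurable_sum _ fun j _ =>
      measurable_pi_apply j))
  have hF : Measurable (fun ω (j : Fin m) => W (ι j) ω) :=
    measurable_pi_lambda _ fun j => hmeas _
  have hF₀ : Measurable (fun ω (j : Fin m) => W (ι₀ j) ω) :=
    measurable_pi_lambda _ fun j => hmeas _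
  have hmap : μ.map (fun ω j => W (ι j) ω) = μ.map (fun ω j => W (ι₀ j) ω) := by
    rw [map_joint μ W hmeas hindep hident ι hι, map_joint μ W hmeas hindep hident ι₀ hι₀]
  have hsumS : ∀ ω, ∑ i ∈ S, W i ω = ∑ j : Fin m, W (ι j) ω := by
    intro ω
    rw [← Finset.sum_coe_sort S (fun i => W i ω)]
    exact (Equiv.sum_comp e.toEquiv (fun i : S => W (i : ℕ) ω)).symm
  have hsumR : ∀ ω, ∑ i ∈ Finset.range m, W i ω = ∑ j : Fin m, W (ι₀ j) ω := by
    intro ω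
    exact (Fin.sum_univ_eq_sum_range (fun i => W i ω) m).symm
  have keyS : (fun ω => Real.log ((m:ℝ)⁻¹ * ∑ i ∈ S, W i ω))
      = g ∘ (fun ω (j : Fin m) => W (ι j) ω) := by
    funext ω; simp only [hg', Function.comp_apply, hsumS ω]
  have keyR : (fun ω => Real.log ((m:ℝ)⁻¹ * ∑ i ∈ Finset.range m, W i ω))
      = g ∘ (fun ω (j : Fin m) => W (ι₀ j) ω) := by
    funext ω; simp only [hg', Function.comp_apply, hsumR ω]
  constructor
  · rw [keyS, keyR]
    calc ∫ ω, (g ∘ fun ω (j : Fin m) => W (ι j) ω) ω ∂μ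
        = ∫ x, g x ∂(μ.map (fun ω (j : Fin m) => W (ι j) ω)) := by
          rw [integral_map hF.aemeasurable hg.aestronglyMeasurable]; rfl
      _ = ∫ x, g x ∂(μ.map (fun ω (j : Fin m) => W (ι₀ j) ω)) := by rw [hmap]
      _ = ∫ ω, (g ∘ fun ω (j : Fin m) => W (ι₀ j) ω) ω ∂μ := by
          rw [integral_map hF₀.aemeasurable hg.aestronglyMeasurable]; rfl
  · intro h
    rw [keyR] at h
    rw [keyS]
    have h1 : Integrable g (μ.map (fun ω (j : Fin m) => W (ι₀ j) ω)) :=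
      (integrable_map_measure hg.aestronglyMeasurable hF₀.aemeasurable).mpr h
    rw [← hmap] at h1
    exact (integrable_map_measure hg.aestronglyMeasurable hF.aemeasurable).mp h1

theorem stmt2 {Ω : Type*} [MeasurableSpace Ω] (μ : Measure Ω) [IsProbabilityMeasure μ]
    (W : ℕ → Ω → ℝ) (hmeas : ∀ i, Measurable (W i))
    (hpos : ∀ i, ∀ᵐ ω ∂μ, 0 < W i ω)
    (hInt : ∀ i, Integrable (W i) μ)
    (hindep : iIndepFun W μ)
    (hident : ∀ i, IdentDistrib (W i) (W 0) μ μ)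
    (L : ℕ → ℝ)
    (hL : ∀ k : ℕ, L k = ∫ ω, Real.log ((k : ℝ)⁻¹ * ∑ i ∈ Finset.range k, W i ω) ∂μ)
    (hLint : ∀ k : ℕ, 0 < k →
      Integrable (fun ω => Real.log ((k : ℝ)⁻¹ * ∑ i ∈ Finset.range k, W i ω)) μ) :
    ∀ m k : ℕ, 0 < m → m ≤ k → L m ≤ L k ∧ -L k ≤ -L m := by
  classical
  -- step inequality
  have step : ∀ k : ℕ, 0 < k → L k ≤ L (k + 1) := by
    intro k hk
    set n := k + 1 with hn
    have hnpos : (0:ℝ) < n := by positivity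
    -- leave-one-out functions
    set p : ℕ → Ω → ℝ := fun j ω => (k:ℝ)⁻¹ * ∑ i ∈ (Finset.range n).erase j, W i ω with hp
    have hcard : ∀ j ∈ Finset.range n, ((Finset.range n).erase j).card = k := by
      intro j hj
      rw [Finset.card_erase_of_mem hj, Finset.card_range]; omega
    have hIntp : ∀ j ∈ Finset.range n,
        Integrable (fun ω => Real.log (p j ω)) μ := by
      intro j hj
      exact (int_subset μ W hmeas hindep hident _ (hcard j hj)).2 (hLint k hk)
    have hintp : ∀ j ∈ Finset.range n, ∫ ω, Real.log (p j ω) ∂μ = L k := by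
      intro j hj
      rw [hL k]
      exact (int_subset μ W hmeas hindep hident _ (hcard j hj)).1
    -- a.e. pointwise Jensen
    have hae : ∀ᵐ ω ∂μ, (n:ℝ)⁻¹ * ∑ j ∈ Finset.range n, Real.log (p j ω)
        ≤ Real.log ((n:ℝ)⁻¹ * ∑ i ∈ Finset.range n, W i ω) := by
      have hall : ∀ᵐ ω ∂μ, ∀ i ∈ Finset.range n, 0 < W i ω :=
        (ae_ball_iff (Finset.range n).countable_toSet).mpr fun i _ => hpos i
      filter_upwards [hall] with ω hω
      have hpmem : ∀ j ∈ Finset.range n, p j ω ∈ Set.Ioi (0:ℝ) := by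
        intro j hj
        have hne : ((Finset.range n).erase j).Nonempty := by
          rw [← Finset.card_pos, hcard j hj]; exact hk
        have : 0 < ∑ i ∈ (Finset.range n).erase j, W i ω :=
          Finset.sum_pos (fun i hi => hω i (Finset.mem_of_mem_erase hi)) hne
        exact mul_pos (by positivity) this
      have hjen := (strictConcaveOn_log_Ioi.concaveOn).le_map_sum
        (t := Finset.range n) (w := fun _ => (n:ℝ)⁻¹) (p := fun j => p j ω)
        (fun i _ => by positivity)
        (by rw [Finset.sum_const, Finset.card_range, nsmul_eq_mul]; field_simp)
        hpmem
      have hsum : ∑ j ∈ Finset.range n, (n:ℝ)⁻¹ • p j ω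
          = (n:ℝ)⁻¹ * ∑ i ∈ Finset.range n, W i ω := by
        have h1 : ∀ j ∈ Finset.range n, ∑ i ∈ (Finset.range n).erase j, W i ω
            = (∑ i ∈ Finset.range n, W i ω) - W j ω := fun j hj =>
          Finset.sum_erase_eq_sub hj
        rw [← Finset.smul_sum]
        simp only [hp, smul_eq_mul]
        rw [← Finset.mul_sum, Finset.sum_congr rfl h1, Finset.sum_sub_distrib,
          Finset.sum_const, Finset.card_range]
        have : (n:ℝ) * (∑ i ∈ Finset.range n, W i ω)
            - ∑ i ∈ Finset.range n, W i ω = (k:ℝ) * ∑ i ∈ Finset.range n, W i ω := by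
          rw [hn]; push_cast; ring
        rw [nsmul_eq_mul, this]
        have hk' : (k:ℝ) ≠ 0 := Nat.cast_ne_zero.mpr hk.ne'
        field_simp
      rw [hsum] at hjen
      calc (n:ℝ)⁻¹ * ∑ j ∈ Finset.range n, Real.log (p j ω)
          = ∑ j ∈ Finset.range n, (n:ℝ)⁻¹ • Real.log (p j ω) := by
            rw [← Finset.smul_sum]; rfl
        _ ≤ _ := hjen
    -- integrate
    have hIntSum : Integrable (fun ω => (n:ℝ)⁻¹ * ∑ j ∈ Finset.range n, Real.log (p j ω)) μ :=
      (integrable_finset_sum _ hIntp).const_mul _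
    have hmono := integral_mono_ae hIntSum (hLint n (by omega)) hae
    have hleft : ∫ ω, (n:ℝ)⁻¹ * ∑ j ∈ Finset.range n, Real.log (p j ω) ∂μ = L k := by
      rw [integral_const_mul, integral_finset_sum _ hIntp, Finset.sum_congr rfl hintp,
        Finset.sum_const, Finset.card_range, nsmul_eq_mul]
      field_simp
    rw [hleft, ← hL n] at hmono
    exact hmono
  have main : ∀ m k : ℕ, 0 < m → m ≤ k → L m ≤ L k := by
    intro m k hm hmk
    induction k with
    | zero => omega
    | succ k ih =>
      rcases Nat.lt_or_ge m (k+1) with h | h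
      · have hmk' : m ≤ k := by omega
        have hk : 0 < k := by omega
        exact (ih hmk').trans (step k hk)
      · have : m = k + 1 := by omega
        subst this; rfl
  intro m k hm hmk
  exact ⟨main m k hm hmk, neg_le_neg (main m k hm hmk)⟩
end

section
/- For i.i.d. positive random variables W_1, ..., W_k with E[log W_1] finite and E[W_1] = μ finite, the sequence L_k = E[log((1/k) Σ_{i=1}^k W_i)] is nondecreasing in k and bounded above by log μ; hence L_k converges to some limit L ≤ log μ. -/
open MeasureTheory ProbabilityTheory Filter

/-- The joint law of any injectively-reindexed finite subfamily of an i.i.d. family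
is the product of the common marginal law. -/
lemma stmt11_aux_pi {Ω : Type*} [MeasurableSpace Ω] (μ : Measure Ω) [IsProbabilityMeasure μ]
    (W : ℕ → Ω → ℝ) (hmeas : ∀ i, Measurable (W i))
    (hindep : iIndepFun W μ)
    (hident : ∀ i, IdentDistrib (W i) (W 0) μ μ)
    (k : ℕ) (hk : k ≠ 0) (f : Fin k → ℕ) (hf : Function.Injective f) :
    μ.map (fun ω (i : Fin k) => W (f i) ω) =
      Measure.pi (fun _ : Fin k => μ.map (W 0)) := by
  have hne : Nonempty (Fin k) := ⟨⟨0, Nat.pos_of_ne_zero hk⟩⟩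
  have hmv : Measurable (fun ω (i : Fin k) => W (f i) ω) :=
    measurable_pi_lambda _ fun i => hmeas (f i)
  have hprob : IsProbabilityMeasure (μ.map (W 0)) :=
    Measure.isProbabilityMeasure_map (hmeas 0).aemeasurable
  refine (Measure.pi_eq (μ := fun _ : Fin k => μ.map (W 0)) fun s hs => ?_).symm
  rw [Measure.map_apply hmv (MeasurableSet.univ_pi hs)]
  set g : ℕ → Fin k := Function.invFun f with hg
  have hgf : ∀ i, g (f i) = i := fun i => Function.leftInverse_invFun hf i
  set T : ℕ → Set ℝ := fun n => s (g n) with hT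
  have hpre : (fun ω (i : Fin k) => W (f i) ω) ⁻¹' (Set.univ.pi s)
      = ⋂ n ∈ Finset.image f Finset.univ, W n ⁻¹' T n := by
    ext ω
    simp only [Set.mem_preimage, Set.mem_pi, Set.mem_univ, forall_true_left, Set.mem_iInter,
      Finset.mem_image, Finset.mem_univ, true_and]
    constructor
    · rintro h n ⟨i, rfl⟩
      simpa [hT, hgf] using h i
    · intro h i
      simpa [hT, hgf] using h (f i) ⟨i, rfl⟩
  rw [hpre, hindep.measure_inter_preimage_eq_mul (Finset.image f Finset.univ)
    (sets := T) (fun n _ => hs (g n))]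
  rw [Finset.prod_image (fun i _ j _ h => hf h)]
  refine Finset.prod_congr rfl fun i _ => ?_
  have h1 : μ (W (f i) ⁻¹' T (f i)) = μ.map (W (f i)) (s i) := by
    rw [Measure.map_apply (hmeas (f i)) (hs i), hT]
    simp [hgf]
  rw [h1, (hident (f i)).map_eq]

/-- Exchangeability: the log-average over any `k`-element index set has the same
distribution as over `range k`. -/
lemma stmt11_aux_exch {Ω : Type*} [MeasurableSpace Ω] (μ : Measure Ω) [IsProbabilityMeasure μ]
    (W : ℕ → Ω → ℝ) (hmeas : ∀ i, Measurable (W i))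
    (hindep : iIndepFun W μ)
    (hident : ∀ i, IdentDistrib (W i) (W 0) μ μ)
    (k : ℕ) (hk : 0 < k) (s : Finset ℕ) (hcard : s.card = k) :
    IdentDistrib (fun ω => Real.log ((k : ℝ)⁻¹ * ∑ j ∈ s, W j ω))
      (fun ω => Real.log ((k : ℝ)⁻¹ * ∑ j ∈ Finset.range k, W j ω)) μ μ := by
  set G : (Fin k → ℝ) → ℝ := fun x => Real.log ((k : ℝ)⁻¹ * ∑ i, x i) with hG
  have hGm : Measurable G :=
    Real.measurable_log.comp (measurable_const.mul
      (Finset.measurable_sum _ fun i _ => measurable_pi_apply i))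
  set e := s.orderIsoOfFin hcard with he
  have hfinj : Function.Injective (fun i : Fin k => ((e i : ℕ))) :=
    fun a b hab => e.injective (Subtype.ext hab)
  have h1 : IdentDistrib (fun ω (i : Fin k) => W (e i) ω)
      (fun ω (i : Fin k) => W i ω) μ μ := by
    refine ⟨(measurable_pi_lambda _ fun i => hmeas _).aemeasurable,
      (measurable_pi_lambda _ fun i => hmeas _).aemeasurable, ?_⟩
    rw [stmt11_aux_pi μ W hmeas hindep hident k hk.ne' _ hfinj,
      stmt11_aux_pi μ W hmeas hindep hident k hk.ne' (fun i : Fin k => (i : ℕ))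
        Fin.val_injective]
  have h2 := h1.comp hGm
  have hs1 : ∀ ω, G (fun i : Fin k => W (e i) ω)
      = Real.log ((k : ℝ)⁻¹ * ∑ j ∈ s, W j ω) := by
    intro ω
    have : ∑ i : Fin k, W (e i) ω = ∑ j ∈ s, W j ω := by
      rw [← Finset.sum_coe_sort s (fun j => W j ω)]
      exact Fintype.sum_equiv e.toEquiv _ _ fun i => rfl
    simp [hG, this]
  have hs2 : ∀ ω, G (fun i : Fin k => W i ω)
      = Real.log ((k : ℝ)⁻¹ * ∑ j ∈ Finset.range k, W j ω) := by
    intro ω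
    simp [hG, Finset.sum_range fun j => W j ω]
  have e1 : (G ∘ fun ω (i : Fin k) => W (e i) ω)
      = fun ω => Real.log ((k : ℝ)⁻¹ * ∑ j ∈ s, W j ω) := funext fun ω => hs1 ω
  have e2 : (G ∘ fun ω (i : Fin k) => W i ω)
      = fun ω => Real.log ((k : ℝ)⁻¹ * ∑ j ∈ Finset.range k, W j ω) := funext fun ω => hs2 ω
  rwa [e1, e2] at h2

theorem stmt11 {Ω : Type*} [MeasurableSpace Ω] (μ : Measure Ω) [IsProbabilityMeasure μ]
    (W : ℕ → Ω → ℝ) (hmeas : ∀ i, Measurable (W i))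
    (hpos : ∀ i, ∀ᵐ ω ∂μ, 0 < W i ω)
    (hInt : ∀ i, Integrable (W i) μ)
    (hLogInt : Integrable (fun ω => Real.log (W 0 ω)) μ)
    (hindep : iIndepFun W μ)
    (hident : ∀ i, IdentDistrib (W i) (W 0) μ μ)
    (m : ℝ) (hmean : ∫ ω, W 0 ω ∂μ = m)
    (L : ℕ → ℝ)
    (hL : ∀ k, L k = ∫ ω, Real.log ((k : ℝ)⁻¹ * ∑ i ∈ Finset.range k, W i ω) ∂μ)
    (hLint : ∀ k : ℕ, 0 < k →
      Integrable (fun ω => Real.log ((k : ℝ)⁻¹ * ∑ i ∈ Finset.range k, W i ω)) μ) :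
    (∀ j k : ℕ, 0 < j → j ≤ k → L j ≤ L k)
      ∧ (∀ k : ℕ, 0 < k → L k ≤ Real.log m)
      ∧ ∃ l : ℝ, l ≤ Real.log m ∧ Tendsto L atTop (nhds l) := by
  have hposall : ∀ᵐ ω ∂μ, ∀ i, 0 < W i ω := ae_all_iff.2 hpos
  -- Step: L k ≤ L (k+1) for k ≥ 1.
  have step : ∀ k : ℕ, 0 < k → L k ≤ L (k + 1) := by
    intro k hk
    -- the erased-index log averages
    set g : ℕ → Ω → ℝ := fun i ω =>
      Real.log ((k : ℝ)⁻¹ * ∑ j ∈ (Finset.range (k + 1)).erase i, W j ω) with hgdef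
    have hcard : ∀ i ∈ Finset.range (k + 1), ((Finset.range (k + 1)).erase i).card = k := by
      intro i hi
      rw [Finset.card_erase_of_mem hi, Finset.card_range]
      omega
    have hexch : ∀ i ∈ Finset.range (k + 1),
        IdentDistrib (g i) (fun ω => Real.log ((k : ℝ)⁻¹ * ∑ j ∈ Finset.range k, W j ω)) μ μ :=
      fun i hi => stmt11_aux_exch μ W hmeas hindep hident k hk _ (hcard i hi)
    have hgint : ∀ i ∈ Finset.range (k + 1), Integrable (g i) μ :=
      fun i hi => (hexch i hi).integrable_iff.2 (hLint k hk)
    have hgeq : ∀ i ∈ Finset.range (k + 1), ∫ ω, g i ω ∂μ = L k := by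
      intro i hi
      rw [(hexch i hi).integral_eq, hL k]
    -- pointwise Jensen
    have hpt : ∀ᵐ ω ∂μ,
        ((k : ℝ) + 1)⁻¹ * ∑ i ∈ Finset.range (k + 1), g i ω ≤
          Real.log (((k : ℝ) + 1)⁻¹ * ∑ i ∈ Finset.range (k + 1), W i ω) := by
    -- use concavity of log
      filter_upwards [hposall] with ω hω
      have hk1 : (0 : ℝ) < (k : ℝ) + 1 := by positivity
      have hkR : (0 : ℝ) < (k : ℝ) := by exact_mod_cast hk
      have hmem : ∀ i ∈ Finset.range (k + 1),
          (k : ℝ)⁻¹ * ∑ j ∈ (Finset.range (k + 1)).erase i, W j ω ∈ Set.Ioi (0 : ℝ) := by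
        intro i hi
        have hpos' : 0 < ∑ j ∈ (Finset.range (k + 1)).erase i, W j ω := by
          apply Finset.sum_pos (fun j _ => hω j)
          rw [← Finset.card_pos, hcard i hi]
          exact hk
        exact Set.mem_Ioi.2 (by positivity)
      have hjensen := (strictConcaveOn_log_Ioi.concaveOn).le_map_sum
        (t := Finset.range (k + 1)) (w := fun _ => ((k : ℝ) + 1)⁻¹)
        (p := fun i => (k : ℝ)⁻¹ * ∑ j ∈ (Finset.range (k + 1)).erase i, W j ω)
        (fun i _ => by positivity)
        (by
          rw [Finset.sum_const, Finset.card_range, nsmul_eq_mul]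
          push_cast
          field_simp)
        hmem
      simp only [smul_eq_mul] at hjensen
      have hsum : ∑ i ∈ Finset.range (k + 1),
          ((k : ℝ) + 1)⁻¹ * ((k : ℝ)⁻¹ * ∑ j ∈ (Finset.range (k + 1)).erase i, W j ω)
          = ((k : ℝ) + 1)⁻¹ * ∑ i ∈ Finset.range (k + 1), W i ω := by
        have herase : ∀ i ∈ Finset.range (k + 1),
            ∑ j ∈ (Finset.range (k + 1)).erase i, W j ω
              = (∑ j ∈ Finset.range (k + 1), W j ω) - W i ω := by
          intro i hi
          rw [Finset.sum_erase_eq_sub hi]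
        have h1 : ∑ i ∈ Finset.range (k + 1),
            ((∑ j ∈ Finset.range (k + 1), W j ω) - W i ω)
            = (k : ℝ) * ∑ j ∈ Finset.range (k + 1), W j ω := by
          rw [Finset.sum_sub_distrib, Finset.sum_const, Finset.card_range, nsmul_eq_mul]
          push_cast
          ring
        calc ∑ i ∈ Finset.range (k + 1),
            ((k : ℝ) + 1)⁻¹ * ((k : ℝ)⁻¹ * ∑ j ∈ (Finset.range (k + 1)).erase i, W j ω)
            = ∑ i ∈ Finset.range (k + 1), ((k : ℝ) + 1)⁻¹
                * ((k : ℝ)⁻¹ * ((∑ j ∈ Finset.range (k + 1), W j ω) - W i ω)) :=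
              Finset.sum_congr rfl fun i hi => by rw [herase i hi]
          _ = ((k : ℝ) + 1)⁻¹ * ((k : ℝ)⁻¹ * ∑ i ∈ Finset.range (k + 1),
                ((∑ j ∈ Finset.range (k + 1), W j ω) - W i ω)) := by
              rw [← Finset.mul_sum, ← Finset.mul_sum]
          _ = ((k : ℝ) + 1)⁻¹ * ∑ i ∈ Finset.range (k + 1), W i ω := by
              rw [h1, ← mul_assoc ((k : ℝ))⁻¹, inv_mul_cancel₀ (by positivity : (k : ℝ) ≠ 0),
                one_mul]
      rw [hsum] at hjensen
      calc ((k : ℝ) + 1)⁻¹ * ∑ i ∈ Finset.range (k + 1), g i ω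
          = ∑ i ∈ Finset.range (k + 1), ((k : ℝ) + 1)⁻¹ *
              Real.log ((k : ℝ)⁻¹ * ∑ j ∈ (Finset.range (k + 1)).erase i, W j ω) := by
            rw [Finset.mul_sum]
        _ ≤ Real.log (((k : ℝ) + 1)⁻¹ * ∑ i ∈ Finset.range (k + 1), W i ω) := hjensen
    have hRHSint : Integrable
        (fun ω => ((k : ℝ) + 1)⁻¹ * ∑ i ∈ Finset.range (k + 1), g i ω) μ :=
      (integrable_finset_sum _ hgint).const_mul _
    have hL1int : Integrable
        (fun ω => Real.log (((k : ℝ) + 1)⁻¹ * ∑ i ∈ Finset.range (k + 1), W i ω)) μ := by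
      have := hLint (k + 1) (Nat.succ_pos k)
      simpa [Nat.cast_add, Nat.cast_one] using this
    have hmono := integral_mono_ae hRHSint hL1int hpt
    have hlhs : ∫ ω, ((k : ℝ) + 1)⁻¹ * ∑ i ∈ Finset.range (k + 1), g i ω ∂μ = L k := by
      rw [integral_const_mul, integral_finset_sum _ hgint,
        Finset.sum_congr rfl hgeq, Finset.sum_const, Finset.card_range, nsmul_eq_mul]
      push_cast
      field_simp
    rw [hlhs] at hmono
    have hrhs : L (k + 1) =
        ∫ ω, Real.log (((k : ℝ) + 1)⁻¹ * ∑ i ∈ Finset.range (k + 1), W i ω) ∂μ := by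
      rw [hL (k + 1)]
      push_cast
      rfl
    rw [hrhs]
    exact hmono
  -- general monotonicity
  have mono : ∀ j k : ℕ, 0 < j → j ≤ k → L j ≤ L k := by
    intro j k hj hjk
    induction k with
    | zero => omega
    | succ n ih =>
      rcases Nat.lt_or_ge j (n + 1) with h | h
      · have hjn : j ≤ n := by omega
        exact le_trans (ih hjn) (step n (by omega))
      · have : j = n + 1 := by omega
        subst this
        exact le_rfl
  -- positivity of m
  have hm0 : 0 < m := by
    have h0le : 0 ≤ᵐ[μ] W 0 := (hpos 0).mono fun ω h => le_of_lt h
    have hSm : MeasurableSet (Function.support (W 0)) := by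
      have : Function.support (W 0) = (W 0) ⁻¹' ({0}ᶜ) := by
        ext ω; simp [Function.mem_support]
      rw [this]
      exact hmeas 0 (measurableSet_singleton (0 : ℝ)).compl
    have hSc : μ (Function.support (W 0))ᶜ = 0 := by
      have hsupp : ∀ᵐ ω ∂μ, ω ∈ Function.support (W 0) :=
        (hpos 0).mono fun ω h => ne_of_gt h
      have hcompl : (Function.support (W 0))ᶜ = {a | W 0 a = 0} := by
        ext a; simp [Function.mem_support]
      rw [hcompl]
      simpa [ae_iff] using hsupp
    have hSpos : 0 < μ (Function.support (W 0)) := by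
      by_contra h
      push_neg at h
      have hS0 : μ (Function.support (W 0)) = 0 := le_antisymm h zero_le
      have : (1 : ENNReal) ≤ 0 := by
        calc (1 : ENNReal) = μ Set.univ := (measure_univ (μ := μ)).symm
          _ = μ ((Function.support (W 0)) ∪ (Function.support (W 0))ᶜ) := by
              rw [Set.union_compl_self]
          _ ≤ μ (Function.support (W 0)) + μ (Function.support (W 0))ᶜ := measure_union_le _ _
          _ = 0 := by rw [hS0, hSc, add_zero]
      simp at this
    rw [← hmean]
    exact (integral_pos_iff_support_of_nonneg_ae h0le (hInt 0)).2 hSpos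
  -- upper bound
  have hub : ∀ k : ℕ, 0 < k → L k ≤ Real.log m := by
    intro k hk
    set X : Ω → ℝ := fun ω => (k : ℝ)⁻¹ * ∑ i ∈ Finset.range k, W i ω with hX
    have hXint : Integrable X μ := (integrable_finset_sum _ fun i _ => hInt i).const_mul _
    have hXmean : ∫ ω, X ω ∂μ = m := by
      rw [hX]
      simp only
      rw [integral_const_mul, integral_finset_sum _ fun i _ => hInt i]
      have : ∀ i ∈ Finset.range k, ∫ ω, W i ω ∂μ = m := fun i _ => by
        rw [(hident i).integral_eq, hmean]
      rw [Finset.sum_congr rfl this, Finset.sum_const, Finset.card_range, nsmul_eq_mul]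
      have hkR : (k : ℝ) ≠ 0 := Nat.cast_ne_zero.2 hk.ne'
      field_simp
    have hae : ∀ᵐ ω ∂μ, Real.log (X ω) ≤ X ω / m - 1 + Real.log m := by
      filter_upwards [hposall] with ω hω
      have hXpos : 0 < X ω := by
        rw [hX]
        have : 0 < ∑ i ∈ Finset.range k, W i ω := by
          apply Finset.sum_pos (fun i _ => hω i)
          simpa [Finset.nonempty_range_iff] using hk.ne'
        have hkR : (0 : ℝ) < (k : ℝ) := by exact_mod_cast hk
        positivity
      have hdiv : 0 < X ω / m := div_pos hXpos hm0
      have := Real.log_le_sub_one_of_pos hdiv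
      rw [Real.log_div hXpos.ne' hm0.ne'] at this
      linarith
    have hsub : Integrable (fun ω => X ω / m - 1) μ :=
      (hXint.div_const m).sub (integrable_const 1)
    have hRint : Integrable (fun ω => X ω / m - 1 + Real.log m) μ :=
      hsub.add (integrable_const _)
    have hLk : Integrable (fun ω => Real.log (X ω)) μ := hLint k hk
    have := integral_mono_ae hLk hRint hae
    have hR : ∫ ω, (X ω / m - 1 + Real.log m) ∂μ = Real.log m := by
      rw [integral_add hsub (integrable_const _),
        integral_sub (hXint.div_const m) (integrable_const 1), integral_div, hXmean,
        integral_const, integral_const]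
      simp [div_self hm0.ne']
    rw [hR] at this
    rw [hL k]
    exact this
  -- convergence
  refine ⟨mono, hub, ?_⟩
  have hbdd : BddAbove (Set.range fun n : ℕ => L (n + 1)) := by
    refine ⟨Real.log m, ?_⟩
    rintro x ⟨n, rfl⟩
    exact hub (n + 1) (Nat.succ_pos n)
  have hmonoM : Monotone fun n : ℕ => L (n + 1) := fun a b hab =>
    mono (a + 1) (b + 1) (Nat.succ_pos a) (by omega)
  have htend : Tendsto (fun n : ℕ => L (n + 1)) atTop (nhds (⨆ n : ℕ, L (n + 1))) :=
    tendsto_atTop_ciSup hmonoM hbdd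
  refine ⟨⨆ n : ℕ, L (n + 1), ?_, ?_⟩
  · exact ciSup_le fun n => hub (n + 1) (Nat.succ_pos n)
  · exact (tendsto_add_atTop_iff_nat 1).mp htend
end

section
/- If f : ℝ → ℝ is concave and X_1, ..., X_k are exchangeable integrable real random variables, then E[f((1/m) Σ_{i=1}^m X_i)] ≤ E[f((1/k) Σ_{i=1}^k X_i)] for all 1 ≤ m ≤ k (assuming the expectations exist). -/
open MeasureTheory

lemma perm_sum_apply {n : ℕ} (h : Fin (n+1) → ℝ) (i : Fin (n+1)) :
    ∑ σ : Equiv.Perm (Fin (n+1)), h (σ i) = (n.factorial : ℝ) * ∑ j, h j := by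
  have h0 : ∑ σ : Equiv.Perm (Fin (n+1)), h (σ i)
      = ∑ σ : Equiv.Perm (Fin (n+1)), h (σ 0) := by
    refine Fintype.sum_equiv (Equiv.mulRight (Equiv.swap 0 i)) _ _ ?_
    intro σ
    simp [Equiv.Perm.mul_apply]
  rw [h0, ← Equiv.sum_comp (Equiv.Perm.decomposeFin (n := n)).symm
    (fun σ => h (σ 0))]
  rw [Fintype.sum_prod_type]
  simp [Equiv.Perm.decomposeFin_symm_apply_zero, Finset.sum_const,
    Fintype.card_perm, Fintype.card_fin, nsmul_eq_mul]
  rw [Finset.mul_sum]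

theorem stmt12 {Ω : Type*} [MeasurableSpace Ω] (μ : Measure Ω) [IsProbabilityMeasure μ]
    (k : ℕ) (f : ℝ → ℝ) (hf : ConcaveOn ℝ Set.univ f)
    (X : Fin k → Ω → ℝ) (hmeas : ∀ i, Measurable (X i)) (hInt : ∀ i, Integrable (X i) μ)
    (hexch : ∀ σ : Equiv.Perm (Fin k),
      μ.map (fun ω => fun i => X (σ i) ω) = μ.map (fun ω => fun i => X i ω))
    (m : ℕ) (hm : 1 ≤ m) (hmk : m ≤ k)
    (hIntm : Integrable (fun ω =>
      f ((m : ℝ)⁻¹ * ∑ i ∈ Finset.univ.filter (fun i : Fin k => (i : ℕ) < m), X i ω)) μ)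
    (hIntk : Integrable (fun ω => f ((k : ℝ)⁻¹ * ∑ i, X i ω)) μ) :
    (∫ ω, f ((m : ℝ)⁻¹ * ∑ i ∈ Finset.univ.filter (fun i : Fin k => (i : ℕ) < m), X i ω) ∂μ)
      ≤ ∫ ω, f ((k : ℝ)⁻¹ * ∑ i, X i ω) ∂μ := by
  have hk : 1 ≤ k := le_trans hm hmk
  -- continuity and measurability of f
  have hfc : Continuous f := by
    rw [← continuousOn_univ]
    exact hf.continuousOn isOpen_univ
  set T : Finset (Fin k) := Finset.univ.filter (fun i : Fin k => (i : ℕ) < m) with hT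
  have hTcard : T.card = m := by
    have : T = (Finset.range m).attachFin
        (fun a ha => lt_of_lt_of_le (Finset.mem_range.mp ha) hmk) := by
      ext i
      simp [hT, Finset.mem_attachFin]
    rw [this, Finset.card_attachFin, Finset.card_range]
  set g : (Fin k → ℝ) → ℝ := fun v => f ((m : ℝ)⁻¹ * ∑ i ∈ T, v i) with hg
  have hgmeas : Measurable g :=
    hfc.measurable.comp
      (measurable_const.mul (Finset.measurable_sum T (fun i _ => measurable_pi_apply i)))
  have hvec : ∀ σ : Equiv.Perm (Fin k), Measurable (fun ω => fun i => X (σ i) ω) :=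
    fun σ => measurable_pi_lambda _ (fun i => hmeas (σ i))
  have hvec1 : Measurable (fun ω => fun i => X i ω) :=
    measurable_pi_lambda _ (fun i => hmeas i)
  -- integrability of each permuted composition
  have hIntσ : ∀ σ : Equiv.Perm (Fin k), Integrable (fun ω => g (fun i => X (σ i) ω)) μ := by
    intro σ
    have h1 : Integrable g (μ.map (fun ω => fun i => X i ω)) := by
      rw [integrable_map_measure hgmeas.aestronglyMeasurable hvec1.aemeasurable]
      exact hIntm
    rw [← hexch σ, integrable_map_measure hgmeas.aestronglyMeasurable (hvec σ).aemeasurable] at h1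
    exact h1
  -- equality of integrals by exchangeability
  have hkey : ∀ σ : Equiv.Perm (Fin k),
      ∫ ω, g (fun i => X (σ i) ω) ∂μ = ∫ ω, g (fun i => X i ω) ∂μ := by
    intro σ
    rw [← integral_map (hvec σ).aemeasurable hgmeas.aestronglyMeasurable, hexch σ,
      integral_map hvec1.aemeasurable hgmeas.aestronglyMeasurable]
  set N : ℝ := (Fintype.card (Equiv.Perm (Fin k)) : ℝ) with hN
  have hNpos : 0 < N := by
    have h := Fintype.card_pos (α := Equiv.Perm (Fin k))
    rw [hN]
    exact_mod_cast h
  -- pointwise Jensen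
  have jensen : ∀ ω, ∑ σ : Equiv.Perm (Fin k), N⁻¹ * g (fun i => X (σ i) ω)
      ≤ f ((k : ℝ)⁻¹ * ∑ i, X i ω) := by
    intro ω
    have h1 : ∑ σ : Equiv.Perm (Fin k), N⁻¹ • g (fun i => X (σ i) ω)
        ≤ f (∑ σ : Equiv.Perm (Fin k), N⁻¹ • ((m : ℝ)⁻¹ * ∑ i ∈ T, X (σ i) ω)) := by
      refine hf.le_map_sum (fun σ _ => by positivity) ?_ (fun σ _ => Set.mem_univ _)
      rw [Finset.sum_const, Finset.card_univ, nsmul_eq_mul, ← hN, mul_inv_cancel₀ hNpos.ne']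
    have h2 : ∑ σ : Equiv.Perm (Fin k), N⁻¹ • ((m : ℝ)⁻¹ * ∑ i ∈ T, X (σ i) ω)
        = (k : ℝ)⁻¹ * ∑ i, X i ω := by
      obtain ⟨n, rfl⟩ : ∃ n, k = n + 1 := ⟨k - 1, (Nat.succ_pred_eq_of_pos hk).symm⟩
      simp only [smul_eq_mul, ← Finset.mul_sum]
      rw [Finset.sum_comm]
      have hps : ∀ i : Fin (n+1), ∑ σ : Equiv.Perm (Fin (n+1)), X (σ i) ω
          = (n.factorial : ℝ) * ∑ j, X j ω := fun i => perm_sum_apply (fun j => X j ω) i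
      simp only [hps]
      rw [Finset.sum_const, hTcard, nsmul_eq_mul, hN, Fintype.card_perm, Fintype.card_fin,
        Nat.factorial_succ]
      have hm0 : (m : ℝ) ≠ 0 := by positivity
      have hn0 : ((n : ℝ) + 1) ≠ 0 := by positivity
      have hnf : ((n.factorial : ℝ)) ≠ 0 := by
        exact_mod_cast Nat.factorial_ne_zero n
      push_cast
      field_simp
    calc ∑ σ : Equiv.Perm (Fin k), N⁻¹ * g (fun i => X (σ i) ω)
        = ∑ σ : Equiv.Perm (Fin k), N⁻¹ • g (fun i => X (σ i) ω) := by
          simp [smul_eq_mul]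
      _ ≤ f (∑ σ : Equiv.Perm (Fin k), N⁻¹ • ((m : ℝ)⁻¹ * ∑ i ∈ T, X (σ i) ω)) := h1
      _ = f ((k : ℝ)⁻¹ * ∑ i, X i ω) := by rw [h2]
  -- integrate
  have hIntSum : Integrable
      (fun ω => ∑ σ : Equiv.Perm (Fin k), N⁻¹ * g (fun i => X (σ i) ω)) μ :=
    integrable_finset_sum _ (fun σ _ => (hIntσ σ).const_mul _)
  have hle : ∫ ω, ∑ σ : Equiv.Perm (Fin k), N⁻¹ * g (fun i => X (σ i) ω) ∂μ
      ≤ ∫ ω, f ((k : ℝ)⁻¹ * ∑ i, X i ω) ∂μ :=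
    integral_mono hIntSum hIntk jensen
  have heq : ∫ ω, ∑ σ : Equiv.Perm (Fin k), N⁻¹ * g (fun i => X (σ i) ω) ∂μ
      = ∫ ω, g (fun i => X i ω) ∂μ := by
    rw [integral_finset_sum _ (fun σ _ => (hIntσ σ).const_mul _)]
    simp only [integral_const_mul, hkey]
    rw [Finset.sum_const, Finset.card_univ, nsmul_eq_mul, ← hN, ← mul_assoc,
      mul_inv_cancel₀ hNpos.ne', one_mul]
  calc (∫ ω, f ((m : ℝ)⁻¹ * ∑ i ∈ Finset.univ.filter (fun i : Fin k => (i : ℕ) < m), X i ω) ∂μ)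
      = ∫ ω, g (fun i => X i ω) ∂μ := rfl
    _ = ∫ ω, ∑ σ : Equiv.Perm (Fin k), N⁻¹ * g (fun i => X (σ i) ω) ∂μ := heq.symm
    _ ≤ ∫ ω, f ((k : ℝ)⁻¹ * ∑ i, X i ω) ∂μ := hle
end
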